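/- Let n be a prime number, let r ≥ 2 be an integer with r·(n−1) even, and let d_1, …, d_r be positive integers. Define ε := 1 if gcd(d_i, n) = 1 for all i, and ε := 0 if n divides d_i for some i (since n is prime, these two cases are exhaustive). Let Φ(X) := 1 + X + ⋯ + X^{n−1} ∈ ℚ[X]. Then in ℚ[X], the polynomial Φ(X)·[n−1]_X divides the polynomial N(X) := (−1)^{n−1} ∏_{i=1}^{r} [n−1]_{X^{d_i}} + ε · n^{r−1} · [n−1]_X · (Φ(X) − 1), where [n−1]_{X^{d}} := ∏_{k=1}^{n−1} (X^{dk} − 1). In particular, the Euler–Poincaré characteristic formula χ = (q−1)(−1)^{n−1} ∏_{i=1}^{r} [n−1]_{q^{d_i}} / [n]_q + ε·n^{r−1}(1 − (q−1)/(q^n−1)) takes integer values at every integer q ≥ 2. -/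

import Mathlib

open Polynomial Finset

noncomputable def brP (m : ℕ) (e : ℕ) : Polynomial ℚ :=
  ∏ k ∈ Finset.range m, ((X : ℚ[X]) ^ (e * (k + 1)) - 1)

lemma prod_pow_sub_one {n : ℕ} (hn : 0 < n) {η : ℂ} (hη : IsPrimitiveRoot η n) :
    ∏ k ∈ Finset.range (n - 1), (η ^ (k + 1) - 1) = (-1) ^ (n - 1) * n := by
  obtain ⟨m, rfl⟩ : ∃ m, n = m + 1 := ⟨n - 1, (Nat.succ_pred_eq_of_pos hn).symm⟩
  simp only [Nat.add_sub_cancel]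
  have himg : (Finset.range (m + 1)).image (η ^ ·) = Polynomial.nthRootsFinset (m + 1) (1 : ℂ) := by
    apply Finset.eq_of_subset_of_card_le
    · intro x hx
      simp only [Finset.mem_image] at hx
      obtain ⟨k, _, rfl⟩ := hx
      rw [Polynomial.mem_nthRootsFinset hn]
      rw [← pow_mul, mul_comm, pow_mul, hη.pow_eq_one, one_pow]
    · rw [hη.card_nthRootsFinset, Finset.card_image_of_injOn hη.injOn_pow,
        Finset.card_range]
  have hXn : (X ^ (m + 1) - 1 : ℂ[X]) = ∏ k ∈ Finset.range (m + 1), (X - C (η ^ k)) := by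
    rw [X_pow_sub_one_eq_prod hn hη, ← himg, Finset.prod_image]
    intro x hx y hy h
    exact hη.injOn_pow (by simpa using hx) (by simpa using hy) h
  rw [Finset.prod_range_succ'] at hXn
  have hgeom := geom_sum_mul (X : ℂ[X]) (m + 1)
  have hcancel : (∑ i ∈ Finset.range (m + 1), (X : ℂ[X]) ^ i) =
      ∏ k ∈ Finset.range m, (X - C (η ^ (k + 1))) := by
    refine mul_right_cancel₀ (b := (X : ℂ[X]) - 1)
      (by simpa using X_sub_C_ne_zero (1 : ℂ)) ?_
    rw [hgeom, hXn]; simp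
  have := congrArg (Polynomial.eval (1 : ℂ)) hcancel
  simp only [eval_geom_sum, one_pow, Finset.sum_const, Finset.card_range, nsmul_eq_mul,
    mul_one, eval_prod, eval_sub, eval_X, eval_C] at this
  have h2 : ∏ k ∈ Finset.range m, (η ^ (k + 1) - 1)
      = ∏ k ∈ Finset.range m, ((-1) * (1 - η ^ (k + 1))) :=
    Finset.prod_congr rfl fun k _ => by ring
  rw [h2, Finset.prod_mul_distrib, Finset.prod_const, Finset.card_range, ← this]

lemma aeval_brP {ζ : ℂ} (m e : ℕ) :
    (aeval ζ) (brP m e) = ∏ k ∈ Finset.range m, (ζ ^ (e * (k + 1)) - 1) := by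
  simp [brP]

lemma aeval_brP_coprime {n : ℕ} (hn : 0 < n) {ζ : ℂ} (hζ : IsPrimitiveRoot ζ n)
    {e : ℕ} (he : Nat.Coprime e n) :
    (aeval ζ) (brP (n - 1) e) = (-1) ^ (n - 1) * n := by
  rw [aeval_brP]
  have : ∀ k, ζ ^ (e * (k + 1)) = (ζ ^ e) ^ (k + 1) := fun k => by rw [pow_mul]
  calc ∏ k ∈ Finset.range (n - 1), (ζ ^ (e * (k + 1)) - 1)
      = ∏ k ∈ Finset.range (n - 1), ((ζ ^ e) ^ (k + 1) - 1) :=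
        Finset.prod_congr rfl fun k _ => by rw [this]
    _ = (-1) ^ (n - 1) * n := prod_pow_sub_one hn (hζ.pow_of_coprime e he)

noncomputable def brPZ (m : ℕ) (e : ℕ) : Polynomial ℤ :=
  ∏ k ∈ Finset.range m, ((X : ℤ[X]) ^ (e * (k + 1)) - 1)

lemma map_brPZ (m e : ℕ) : (brPZ m e).map (Int.castRingHom ℚ) = brP m e := by
  simp [brPZ, brP, Polynomial.map_prod]

lemma brPZ_monic (m : ℕ) : (brPZ m 1).Monic := by
  apply monic_prod_of_monic
  intro k _
  have : ((X : ℤ[X]) ^ (1 * (k + 1)) - 1) = X ^ (k + 1) - C 1 := by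
    rw [one_mul, map_one]
  rw [this]
  exact monic_X_pow_sub_C (1 : ℤ) (Nat.succ_ne_zero k)

lemma brP_one_dvd (m e : ℕ) : brP m 1 ∣ brP m e := by
  apply Finset.prod_dvd_prod_of_dvd
  intro k _
  have : (X : ℚ[X]) ^ (e * (k + 1)) - 1 = ((X ^ (1 * (k + 1))) ^ e - 1 ^ e) := by
    rw [one_pow, one_mul, ← pow_mul, mul_comm]
  rw [this]
  exact sub_dvd_pow_sub_pow _ _ e

set_option maxHeartbeats 1600000 in
theorem stmt_11 (n : ℕ) (hn : n.Prime) (r : ℕ) (hr : 2 ≤ r)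
    (heven : Even (r * (n - 1)))
    (d : Fin r → ℕ) (hd : ∀ i, 0 < d i)
    (ε : ℕ) (hε : ε = if ∀ i, Nat.gcd (d i) n = 1 then 1 else 0) :
    ((∑ k ∈ Finset.range n, (X : ℚ[X]) ^ k) * brP (n - 1) 1 ∣
        (-1) ^ (n - 1) * ∏ i, brP (n - 1) (d i) +
          (ε : ℚ[X]) * (n : ℚ[X]) ^ (r - 1) * brP (n - 1) 1 *
            ((∑ k ∈ Finset.range n, (X : ℚ[X]) ^ k) - 1)) ∧
      ∀ q : ℤ, 2 ≤ q → ∃ c : ℤ, (c : ℚ) =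
        ((q : ℚ) - 1) * (-1) ^ (n - 1) *
            (∏ i, ∏ k ∈ Finset.range (n - 1), ((q : ℚ) ^ (d i * (k + 1)) - 1)) /
            (∏ k ∈ Finset.range n, ((q : ℚ) ^ (k + 1) - 1)) +
          (ε : ℚ) * (n : ℚ) ^ (r - 1) * (1 - ((q : ℚ) - 1) / ((q : ℚ) ^ n - 1)) := by
  haveI : Fact n.Prime := ⟨hn⟩
  have hnpos : 0 < n := hn.pos
  obtain ⟨ζ, hζ⟩ : ∃ ζ : ℂ, IsPrimitiveRoot ζ n :=
    ⟨_, Complex.isPrimitiveRoot_exp n hnpos.ne'⟩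
  have hΦ : (∑ k ∈ Finset.range n, (X : ℚ[X]) ^ k) = cyclotomic n ℚ :=
    (cyclotomic_prime ℚ n).symm
  have hmin : cyclotomic n ℚ = minpoly ℚ ζ := cyclotomic_eq_minpoly_rat hζ hnpos
  set N : ℚ[X] := (-1) ^ (n - 1) * ∏ i, brP (n - 1) (d i) +
      (ε : ℚ[X]) * (n : ℚ[X]) ^ (r - 1) * brP (n - 1) 1 *
        ((∑ k ∈ Finset.range n, (X : ℚ[X]) ^ k) - 1) with hN
  have hb1 : (aeval ζ) (brP (n - 1) 1) = (-1) ^ (n - 1) * n :=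
    aeval_brP_coprime hnpos hζ (Nat.coprime_one_left n)
  have hb1ne : (aeval ζ) (brP (n - 1) 1) ≠ 0 := by
    rw [hb1]
    exact mul_ne_zero (pow_ne_zero _ (by norm_num)) (Nat.cast_ne_zero.2 hnpos.ne')
  have hnotdvd : ¬ (cyclotomic n ℚ ∣ brP (n - 1) 1) := by
    intro h
    obtain ⟨c, hc⟩ := h
    apply hb1ne
    rw [hc, map_mul, hmin, minpoly.aeval, zero_mul]
  have hcop : IsCoprime (cyclotomic n ℚ) (brP (n - 1) 1) :=
    ((cyclotomic.irreducible_rat hnpos).coprime_iff_not_dvd).2 hnotdvd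
  have i0 : Fin r := ⟨0, lt_of_lt_of_le two_pos hr⟩
  have hb1N : brP (n - 1) 1 ∣ N := by
    apply dvd_add
    · exact Dvd.dvd.mul_left
        ((brP_one_dvd (n - 1) (d i0)).trans
          (Finset.dvd_prod_of_mem (fun i => brP (n - 1) (d i)) (Finset.mem_univ i0))) _
    · exact ⟨(ε : ℚ[X]) * (n : ℚ[X]) ^ (r - 1) *
        ((∑ k ∈ Finset.range n, (X : ℚ[X]) ^ k) - 1), by ring⟩
  have hN0 : (aeval ζ) N = 0 := by
    by_cases hall : ∀ i, Nat.gcd (d i) n = 1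
    · have hε1 : ε = 1 := by rw [hε, if_pos hall]
      have hP : (aeval ζ) (∏ i, brP (n - 1) (d i)) = ((-1) ^ (n - 1) * (n : ℂ)) ^ r := by
        rw [map_prod]
        rw [Finset.prod_congr rfl fun i _ => aeval_brP_coprime hnpos hζ (hall i)]
        simp [Finset.card_univ]
      have hgs : (aeval ζ) (∑ k ∈ Finset.range n, (X : ℚ[X]) ^ k) = 0 := by
        simp only [map_sum, map_pow, aeval_X]
        exact hζ.geom_sum_eq_zero hn.one_lt
      have hpow : ((-1 : ℂ)) ^ ((n - 1) * r) = 1 :=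
        Even.neg_one_pow (by rw [mul_comm]; exact heven)
      obtain ⟨r', rfl⟩ : ∃ r', r = r' + 1 := ⟨r - 1, by omega⟩
      rw [hN, hε1]
      push_cast
      simp only [map_add, map_mul, map_pow, map_sub, map_neg, map_one, one_mul,
        aeval_natCast, hgs, hP, hb1]
      rw [mul_pow, ← pow_mul, hpow, one_mul]
      ring
    · have hε0 : ε = 0 := by rw [hε, if_neg hall]
      push_neg at hall
      obtain ⟨j, hj⟩ := hall
      have hdvd : n ∣ d j := by
        by_contra hnd
        exact hj ((Nat.coprime_comm.mp ((Nat.Prime.coprime_iff_not_dvd hn).2 hnd)))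
      have hPz : (aeval ζ) (∏ i, brP (n - 1) (d i)) = 0 := by
        rw [map_prod]
        apply Finset.prod_eq_zero (Finset.mem_univ j)
        rw [aeval_brP]
        apply Finset.prod_eq_zero (i := 0)
        · rw [Finset.mem_range]
          have := hn.two_le
          omega
        · have h1 : ζ ^ (d j * (0 + 1)) = 1 :=
            (hζ.pow_eq_one_iff_dvd _).2 (by simpa using hdvd)
          rw [h1, sub_self]
      rw [hN, hε0]
      push_cast
      simp only [map_add, map_mul, hPz, mul_zero, zero_add, zero_mul, map_zero]
  have hcyc : cyclotomic n ℚ ∣ N := hmin ▸ minpoly.dvd ℚ ζ hN0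
  have Hdvd : (∑ k ∈ Finset.range n, (X : ℚ[X]) ^ k) * brP (n - 1) 1 ∣ N := by
    rw [hΦ]
    exact hcop.mul_dvd hcyc hb1N
  refine ⟨Hdvd, ?_⟩
  set DZ : ℤ[X] := (∑ k ∈ Finset.range n, (X : ℤ[X]) ^ k) * brPZ (n - 1) 1 with hDZ
  set NZ : ℤ[X] := (-1) ^ (n - 1) * ∏ i, brPZ (n - 1) (d i) +
      (ε : ℤ[X]) * (n : ℤ[X]) ^ (r - 1) * brPZ (n - 1) 1 *
        ((∑ k ∈ Finset.range n, (X : ℤ[X]) ^ k) - 1) with hNZ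
  have hmapΦ : (∑ k ∈ Finset.range n, (X : ℤ[X]) ^ k).map (Int.castRingHom ℚ)
      = ∑ k ∈ Finset.range n, (X : ℚ[X]) ^ k := by
    simp [Polynomial.map_sum]
  have hmapD : DZ.map (Int.castRingHom ℚ)
      = (∑ k ∈ Finset.range n, (X : ℚ[X]) ^ k) * brP (n - 1) 1 := by
    rw [hDZ, Polynomial.map_mul, hmapΦ, map_brPZ]
  have hmapN : NZ.map (Int.castRingHom ℚ) = N := by
    rw [hNZ, hN]
    simp only [Polynomial.map_add, Polynomial.map_mul, Polynomial.map_pow,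
      Polynomial.map_sub, Polynomial.map_neg, Polynomial.map_one, Polynomial.map_prod,
      Polynomial.map_natCast, map_brPZ, hmapΦ]
  have hDZmonic : DZ.Monic := by
    have h1 : (∑ k ∈ Finset.range n, (X : ℤ[X]) ^ k).Monic := by
      rw [← cyclotomic_prime ℤ n]
      exact cyclotomic.monic n ℤ
    exact h1.mul (brPZ_monic (n - 1))
  have hdvdZ : DZ ∣ NZ := by
    rw [← Polynomial.map_dvd_map (Int.castRingHom ℚ) Int.cast_injective hDZmonic,
      hmapD, hmapN]
    exact Hdvd
  obtain ⟨CZ, hCZ⟩ := hdvdZ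
  intro q hq
  refine ⟨CZ.eval q, ?_⟩
  have hq1 : (1 : ℚ) < (q : ℚ) := by exact_mod_cast lt_of_lt_of_le one_lt_two hq
  set S : ℚ := ∑ k ∈ Finset.range n, (q : ℚ) ^ k with hS
  set B : ℚ := ∏ k ∈ Finset.range (n - 1), ((q : ℚ) ^ (k + 1) - 1) with hB
  set A : ℚ := ∏ i, ∏ k ∈ Finset.range (n - 1), ((q : ℚ) ^ (d i * (k + 1)) - 1) with hA
  have hpowne : ∀ m : ℕ, m ≠ 0 → (q : ℚ) ^ m - 1 ≠ 0 := by
    intro m hm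
    have : (1 : ℚ) < (q : ℚ) ^ m := one_lt_pow₀ hq1 hm
    linarith
  have hgs : ((q : ℚ) - 1) * S = (q : ℚ) ^ n - 1 := by
    rw [mul_comm, hS]; exact geom_sum_mul _ n
  have hBne : B ≠ 0 := by
    rw [hB]
    exact Finset.prod_ne_zero_iff.2 fun k _ => hpowne (k + 1) (Nat.succ_ne_zero k)
  have hqn : (q : ℚ) ^ n - 1 ≠ 0 := hpowne n hnpos.ne'
  have hq1ne : (q : ℚ) - 1 ≠ 0 := by linarith
  have hSne : S ≠ 0 := fun h => hqn (by rw [← hgs, h, mul_zero])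
  have hev := congrArg (fun p : ℚ[X] => Polynomial.eval (q : ℚ) p)
    (congrArg (Polynomial.map (Int.castRingHom ℚ)) hCZ)
  simp only [Polynomial.map_mul, hmapD, hmapN, eval_mul] at hev
  have hevC : Polynomial.eval (q : ℚ) (CZ.map (Int.castRingHom ℚ)) = ((CZ.eval q : ℤ) : ℚ) := by
    have := Polynomial.eval_intCast_map (Int.castRingHom ℚ) CZ q
    simpa using this
  have hevΦ : Polynomial.eval (q : ℚ) (∑ k ∈ Finset.range n, (X : ℚ[X]) ^ k) = S := by
    simp [hS]
  have hevB : Polynomial.eval (q : ℚ) (brP (n - 1) 1) = B := by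
    simp [brP, hB, eval_prod]
  have hevA : Polynomial.eval (q : ℚ) (∏ i, brP (n - 1) (d i)) = A := by
    simp [brP, hA, eval_prod]
  rw [hN] at hev
  simp only [eval_add, eval_mul, eval_pow, eval_sub, eval_neg, eval_one, eval_natCast,
    hevΦ, hevB, hevA, hevC] at hev
  have hsplit : ∏ k ∈ Finset.range n, ((q : ℚ) ^ (k + 1) - 1) = B * ((q : ℚ) ^ n - 1) := by
    obtain ⟨m, hm⟩ : ∃ m, n = m + 1 := ⟨n - 1, (Nat.succ_pred_eq_of_pos hnpos).symm⟩
    rw [hm, Finset.prod_range_succ, hB, hm]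
    simp
  rw [hsplit, ← hgs]
  have hcval : ((CZ.eval q : ℤ) : ℚ)
      = ((-1) ^ (n - 1) * A + (ε : ℚ) * (n : ℚ) ^ (r - 1) * B * (S - 1)) / (S * B) := by
    rw [hev, mul_div_cancel_left₀ _ (mul_ne_zero hSne hBne)]
  rw [hcval]
  field_simp
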